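/- Let g = k ⊕ p be a vector space decomposition, μ : p × p → g bilinear skew-symmetric with k-component μ_k and p-component μ_p. If μ evolves by d/dt μ_k(t) = μ_k(t)(Q(t)·,·) + μ_k(t)(·,Q(t)·) for endomorphisms Q(t) of p, then d/dt |μ_k(t)|² = -4 tr( Q(t) Σ_{l=1}^q J_{μ_k(t)}(Z_l)² ), where {Z_l} is an orthonormal basis of k and J_{μ_k}(Z) ∈ End(p) is the skew-symmetric map defined by ⟨J_{μ_k}(Z)X, Y⟩ = ⟨μ_k(X,Y), Z⟩. -/

import Mathlib

open scoped RealInnerProductSpace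

/-- if `μ_k(t)` evolves by `d/dt μ_k = μ_k(Q·,·) + μ_k(·,Q·)`, then
`d/dt |μ_k(t)|² = -4 tr(Q(t) Σ_l J_{μ_k(t)}(Z_l)²)`. -/
theorem stmt11 (p k : Type*) [NormedAddCommGroup p] [InnerProductSpace ℝ p]
    [FiniteDimensional ℝ p] [NormedAddCommGroup k] [InnerProductSpace ℝ k]
    [FiniteDimensional ℝ k]
    (bp : OrthonormalBasis (Fin (Module.finrank ℝ p)) ℝ p)
    (bk : OrthonormalBasis (Fin (Module.finrank ℝ k)) ℝ k)
    (μk : ℝ → p →ₗ[ℝ] p →ₗ[ℝ] k) (hskew : ∀ (t : ℝ) (x y : p), μk t x y = -μk t y x)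
    (Q : ℝ → p →ₗ[ℝ] p) (hQcont : ∀ x : p, Continuous fun t => Q t x)
    (hflow : ∀ (t : ℝ) (x y : p), HasDerivAt (fun s => μk s x y)
      (μk t (Q t x) y + μk t x (Q t y)) t)
    (J : ℝ → k → (p →ₗ[ℝ] p))
    (hJ : ∀ (t : ℝ) (Z : k) (x y : p), ⟪J t Z x, y⟫ = ⟪μk t x y, Z⟫) :
    ∀ t : ℝ, HasDerivAt (fun s => ∑ i, ∑ j, ⟪μk s (bp i) (bp j), μk s (bp i) (bp j)⟫)
      (-4 * LinearMap.trace ℝ p (Q t ∘ₗ ∑ l, J t (bk l) ∘ₗ J t (bk l))) t := by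
  intro t
  -- J is skew-adjoint
  have hJskew : ∀ (Z : k) (x y : p), ⟪J t Z x, y⟫ = -⟪x, J t Z y⟫ := by
    intro Z x y
    rw [hJ, real_inner_comm (J t Z y) x, hJ, hskew t y x, inner_neg_left, neg_neg]
  -- trace via orthonormal basis
  have htr : ∀ f : p →ₗ[ℝ] p, LinearMap.trace ℝ p f = ∑ i, ⟪f (bp i), bp i⟫ := by
    intro f
    rw [LinearMap.trace_eq_matrix_trace ℝ bp.toBasis, Matrix.trace]
    refine Finset.sum_congr rfl fun i _ => ?_
    simp [Matrix.diag, LinearMap.toMatrix_apply, OrthonormalBasis.coe_toBasis_repr_apply,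
      OrthonormalBasis.repr_apply_apply, real_inner_comm]
  -- the core identity
  have hmain : ∑ i, ∑ j, ⟪μk t (Q t (bp i)) (bp j), μk t (bp i) (bp j)⟫
      = - LinearMap.trace ℝ p (Q t ∘ₗ ∑ l, J t (bk l) ∘ₗ J t (bk l)) := by
    have h1 : ∀ i j, ⟪μk t (Q t (bp i)) (bp j), μk t (bp i) (bp j)⟫
        = ∑ l, ⟪J t (bk l) (Q t (bp i)), bp j⟫ * ⟪bp j, J t (bk l) (bp i)⟫ := by
      intro i j
      rw [← bk.sum_inner_mul_inner]
      refine Finset.sum_congr rfl fun l _ => ?_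
      rw [← hJ, real_inner_comm (μk t (bp i) (bp j)) (bk l), ← hJ,
        real_inner_comm (bp j) (J t (bk l) (bp i))]
    have h2 : ∀ i, (∑ j, ∑ l, ⟪J t (bk l) (Q t (bp i)), bp j⟫ * ⟪bp j, J t (bk l) (bp i)⟫)
        = ∑ l, ⟪J t (bk l) (Q t (bp i)), J t (bk l) (bp i)⟫ := by
      intro i
      rw [Finset.sum_comm]
      exact Finset.sum_congr rfl fun l _ => bp.sum_inner_mul_inner _ _
    have h3 : ∀ (i : Fin (Module.finrank ℝ p)) (l : Fin (Module.finrank ℝ k)),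
        ⟪J t (bk l) (Q t (bp i)), J t (bk l) (bp i)⟫
        = -⟪(J t (bk l) ∘ₗ J t (bk l)) (Q t (bp i)), bp i⟫ := by
      intro i l
      rw [real_inner_comm (J t (bk l) (bp i)) (J t (bk l) (Q t (bp i))),
        hJskew (bk l) (bp i) (J t (bk l) (Q t (bp i))),
        real_inner_comm (J t (bk l) (J t (bk l) (Q t (bp i)))) (bp i),
        LinearMap.comp_apply]
    simp_rw [h1, h2, h3]
    rw [LinearMap.trace_comp_comm', htr]
    simp [LinearMap.comp_apply, LinearMap.sum_apply, sum_inner]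
  have hderiv : HasDerivAt
      (fun s => ∑ i, ∑ j, ⟪μk s (bp i) (bp j), μk s (bp i) (bp j)⟫)
      (∑ i, ∑ j,
        (⟪μk t (bp i) (bp j), μk t (Q t (bp i)) (bp j) + μk t (bp i) (Q t (bp j))⟫
          + ⟪μk t (Q t (bp i)) (bp j) + μk t (bp i) (Q t (bp j)), μk t (bp i) (bp j)⟫)) t := by
    refine HasDerivAt.fun_sum fun i _ => HasDerivAt.fun_sum fun j _ => ?_
    exact HasDerivAt.inner ℝ (hflow t _ _) (hflow t _ _)
  convert hderiv using 1
  have hsw : ∑ i, ∑ j, ⟪μk t (bp i) (Q t (bp j)), μk t (bp i) (bp j)⟫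
      = ∑ i, ∑ j, ⟪μk t (Q t (bp i)) (bp j), μk t (bp i) (bp j)⟫ := by
    rw [Finset.sum_comm]
    refine Finset.sum_congr rfl fun i _ => Finset.sum_congr rfl fun j _ => ?_
    rw [hskew t (bp j) (Q t (bp i)), hskew t (bp j) (bp i), inner_neg_neg]
  have expand : ∀ i j,
      ⟪μk t (bp i) (bp j), μk t (Q t (bp i)) (bp j) + μk t (bp i) (Q t (bp j))⟫
        + ⟪μk t (Q t (bp i)) (bp j) + μk t (bp i) (Q t (bp j)), μk t (bp i) (bp j)⟫
      = 2 * ⟪μk t (Q t (bp i)) (bp j), μk t (bp i) (bp j)⟫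
          + 2 * ⟪μk t (bp i) (Q t (bp j)), μk t (bp i) (bp j)⟫ := by
    intro i j
    rw [inner_add_right, inner_add_left,
      real_inner_comm (μk t (Q t (bp i)) (bp j)) (μk t (bp i) (bp j)),
      real_inner_comm (μk t (bp i) (Q t (bp j))) (μk t (bp i) (bp j))]
    ring
  simp_rw [expand, Finset.sum_add_distrib, ← Finset.mul_sum]
  rw [hsw, hmain]
  ring
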